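/- Let U ∈ U(d). For A ⊆ {1,…,d} set Π_A = Σ_{i∈A} |i⟩⟨i| and Θ_A = U Π_A U†, and for disjoint Γ, Δ ⊆ {1,…,d} let ℙ_{Γ,Δ} be the orthogonal projector onto span{U|i⟩ : i ∈ Γᶜ} ∩ span{|j⟩ : j ∈ Δᶜ}, where Aᶜ denotes the complement in {1,…,d}. Then the optimal success probability of unambiguous discrimination of 𝒫_𝟙 and 𝒫_U without the use of entanglement equals p_u(𝒫_𝟙, 𝒫_U) = (1/2)·max{ ‖ℙ_{Γ,Δ}(Π_Γ + Θ_Δ)ℙ_{Γ,Δ}‖ : Γ, Δ ⊆ {1,…,d}, Γ ∩ Δ = ∅ }, where ‖·‖ is the operator norm. -/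

import Mathlib

open Matrix MeasureTheory
open scoped ENNReal ComplexOrder

noncomputable section

namespace Paper

/-- Trace norm `‖X‖₁ = Tr √(Xᴴ X)`. -/
noncomputable def traceNorm {n : Type*} [Fintype n] [DecidableEq n] (X : Matrix n n ℂ) : ℝ :=
  (((Matrix.posSemidef_conjTranspose_mul_self X).1.eigenvectorUnitary : Matrix n n ℂ) *
    Matrix.diagonal ((fun r : ℝ => (r : ℂ)) ∘ Real.sqrt ∘ (Matrix.posSemidef_conjTranspose_mul_self X).1.eigenvalues) *
    (star (Matrix.posSemidef_conjTranspose_mul_self X).1.eigenvectorUnitary : Matrix n n ℂ)).trace.re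

/-- `(S ⊗ id)(X)`, the map `S` applied to the first tensor factor. -/
def tensorApplyLeft {n n' m : Type*} [Fintype n] [Fintype m]
    (S : Matrix n n ℂ →ₗ[ℂ] Matrix n' n' ℂ)
    (X : Matrix (n × m) (n × m) ℂ) : Matrix (n' × m) (n' × m) ℂ :=
  Matrix.of fun p q => S (Matrix.of fun i j => X (i, p.2) (j, q.2)) p.1 q.1

/-- Diamond norm of a linear map between matrix spaces. -/
noncomputable def diamondNorm {n n' : Type*} [Fintype n] [DecidableEq n] [Fintype n']
    [DecidableEq n'] (S : Matrix n n ℂ →ₗ[ℂ] Matrix n' n' ℂ) : ℝ :=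
  sSup { t : ℝ | ∃ (k : ℕ) (X : Matrix (n × Fin (k + 1)) (n × Fin (k + 1)) ℂ),
    traceNorm X = 1 ∧ t = traceNorm (tensorApplyLeft S X) }

/-- The completely dephasing channel in the standard basis. -/
def dephaseMap (n : Type*) [Fintype n] [DecidableEq n] :
    Matrix n n ℂ →ₗ[ℂ] Matrix n n ℂ where
  toFun X := Matrix.diagonal fun i => X i i
  map_add' X Y := by
    ext i j
    by_cases h : i = j <;> simp [Matrix.diagonal_apply, h]
  map_smul' c X := by
    ext i j
    by_cases h : i = j <;> simp [Matrix.diagonal_apply, h]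

/-- The unitary channel `Φ_U(X) = U X Uᴴ`. -/
def unitaryChannel {n : Type*} [Fintype n] (U : Matrix n n ℂ) :
    Matrix n n ℂ →ₗ[ℂ] Matrix n n ℂ where
  toFun X := U * X * Uᴴ
  map_add' X Y := by simp [Matrix.mul_add, Matrix.add_mul]
  map_smul' c X := by simp [mul_smul_comm, smul_mul_assoc]

/-- The von Neumann measurement channel `𝒫_U(σ) = Σ_i ⟨i|U† σ U|i⟩ |i⟩⟨i| = diag(U† σ U)`. -/
def measChannel {n : Type*} [Fintype n] [DecidableEq n] (U : Matrix n n ℂ) :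
    Matrix n n ℂ →ₗ[ℂ] Matrix n n ℂ :=
  (dephaseMap n).comp (unitaryChannel Uᴴ)

/-- `N`-fold tensor (Kronecker) power of a matrix. -/
def tensorPow {d : ℕ} (U : Matrix (Fin d) (Fin d) ℂ) (N : ℕ) :
    Matrix (Fin N → Fin d) (Fin N → Fin d) ℂ :=
  Matrix.of fun f g => ∏ k, U (f k) (g k)

/-- Tensor product of a family of `d × d` matrices. -/
def tensorFamily {d N : ℕ} (ρ : Fin N → Matrix (Fin d) (Fin d) ℂ) :
    Matrix (Fin N → Fin d) (Fin N → Fin d) ℂ :=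
  Matrix.of fun f g => ∏ k, (ρ k) (f k) (g k)

/-- Density matrices. -/
def IsDensityMatrix {n : Type*} [Fintype n] (ρ : Matrix n n ℂ) : Prop :=
  ρ.PosSemidef ∧ ρ.trace = 1

/-- The set of diagonal unitary matrices `𝒟𝒰`. -/
def diagUnitary (n : Type*) [Fintype n] [DecidableEq n] : Set (Matrix n n ℂ) :=
  { E | E ∈ Matrix.unitaryGroup n ℂ ∧ E.IsDiag }

/-- `Θ(U)`: the angle of the shortest arc of the unit circle containing all eigenvalues. -/
noncomputable def thetaArc {n : Type*} [Fintype n] [DecidableEq n] (U : Matrix n n ℂ) : ℝ :=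
  sInf { t : ℝ | 0 ≤ t ∧ ∃ α : ℝ, ∀ lam ∈ spectrum ℂ U, ∃ s : ℝ, 0 ≤ s ∧ s ≤ t ∧
    lam = Complex.exp (Complex.I * (↑α + ↑s)) }

/-- `Υ(U) = min_{E ∈ 𝒟𝒰} Θ(UE)`. -/
noncomputable def upsilonArc {n : Type*} [Fintype n] [DecidableEq n] (U : Matrix n n ℂ) : ℝ :=
  sInf { t : ℝ | ∃ E ∈ diagUnitary n, t = thetaArc (U * E) }

/-- Numerical range `W(A)`. -/
def numericalRange {n : Type*} [Fintype n] (A : Matrix n n ℂ) : Set ℂ :=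
  { z | ∃ x : n → ℂ, (∑ i, ‖x i‖ ^ 2) = 1 ∧ z = star x ⬝ᵥ A.mulVec x }

/-- minimal modulus over the numerical range -/
noncomputable def nuMin {n : Type*} [Fintype n] (A : Matrix n n ℂ) : ℝ :=
  sInf { r : ℝ | ∃ z ∈ numericalRange A, r = ‖z‖ }

/-- Operator (spectral) norm of a matrix. -/
noncomputable def opNorm {n : Type*} [Fintype n] [DecidableEq n] (A : Matrix n n ℂ) : ℝ :=
  ‖Matrix.toEuclideanCLM (𝕜 := ℂ) A‖

/-- Matrix of the orthogonal projection onto a subspace of `EuclideanSpace ℂ n`. -/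
noncomputable def projMatrix {n : Type*} [Fintype n] [DecidableEq n]
    (K : Submodule ℂ (EuclideanSpace ℂ n)) : Matrix n n ℂ :=
  Matrix.toEuclideanLin.symm (K.subtype ∘ₗ (K.orthogonalProjectionOnto).toLinearMap)

/-- Matrix of the orthogonal projection onto the eigenspace of `A` for eigenvalue `lam`. -/
noncomputable def eigProj {n : Type*} [Fintype n] [DecidableEq n] (A : Matrix n n ℂ) (lam : ℂ) :
    Matrix n n ℂ :=
  projMatrix (Module.End.eigenspace (Matrix.toEuclideanLin A) lam)

end Paper

namespace Paper

/-- Optimal unambiguous discrimination probability of `𝒫_𝟙` vs `𝒫_U` without entanglement. -/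
noncomputable def puNoEnt {n : Type*} [Fintype n] [DecidableEq n] (U : Matrix n n ℂ) : ℝ :=
  sSup { t : ℝ | ∃ σ M₁ M₂ M₃ : Matrix n n ℂ,
    IsDensityMatrix σ ∧ M₁.PosSemidef ∧ M₂.PosSemidef ∧ M₃.PosSemidef ∧ M₁ + M₂ + M₃ = 1 ∧
    (M₂ * measChannel (1 : Matrix n n ℂ) σ).trace = 0 ∧
    (M₁ * measChannel U σ).trace = 0 ∧
    t = (1 / 2) * (((M₁ * measChannel (1 : Matrix n n ℂ) σ).trace).re +
                   ((M₂ * measChannel U σ).trace).re) }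

/-- Optimal entanglement-assisted unambiguous discrimination probability of `𝒫_𝟙` vs `𝒫_U`. -/
noncomputable def puEnt {n : Type*} [Fintype n] [DecidableEq n] (U : Matrix n n ℂ) : ℝ :=
  sSup { t : ℝ | ∃ (k : ℕ) (σ M₁ M₂ M₃ : Matrix (n × Fin (k + 1)) (n × Fin (k + 1)) ℂ),
    IsDensityMatrix σ ∧ M₁.PosSemidef ∧ M₂.PosSemidef ∧ M₃.PosSemidef ∧ M₁ + M₂ + M₃ = 1 ∧
    (M₂ * tensorApplyLeft (measChannel (1 : Matrix n n ℂ)) σ).trace = 0 ∧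
    (M₁ * tensorApplyLeft (measChannel U) σ).trace = 0 ∧
    t = (1 / 2) * (((M₁ * tensorApplyLeft (measChannel (1 : Matrix n n ℂ)) σ).trace).re +
                   ((M₂ * tensorApplyLeft (measChannel U) σ).trace).re) }

/-- `Π_A = Σ_{i ∈ A} |i⟩⟨i|`. -/
noncomputable def basisProj {n : Type*} [Fintype n] [DecidableEq n] (A : Finset n) :
    Matrix n n ℂ :=
  ∑ i ∈ A, Matrix.single i i (1 : ℂ)

/-- `ℙ_{Γ,Δ}`: projector onto `span{U|i⟩ : i ∈ Γᶜ} ∩ span{|j⟩ : j ∈ Δᶜ}`. -/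
noncomputable def PGD {n : Type*} [Fintype n] [DecidableEq n] (U : Matrix n n ℂ)
    (Γ Δ : Finset n) : Matrix n n ℂ :=
  projMatrix
    ((Submodule.span ℂ { v : EuclideanSpace ℂ n |
        ∃ i ∉ Γ, v = (WithLp.equiv 2 (n → ℂ)).symm (fun r => U r i) }) ⊓
     (Submodule.span ℂ { v : EuclideanSpace ℂ n |
        ∃ j ∉ Δ, v = (WithLp.equiv 2 (n → ℂ)).symm (Pi.single j 1) }))

/-- `W` acting on the `k`-th of `N` registers (identity elsewhere). -/
def actOn {d : ℕ} (N : ℕ) (W : Matrix (Fin d) (Fin d) ℂ) (k : ℕ) :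
    Matrix (Fin N → Fin d) (Fin N → Fin d) ℂ :=
  Matrix.of fun f g => ∏ j : Fin N,
    if (j : ℕ) = k then W (f j) (g j) else (if f j = g j then (1 : ℂ) else 0)

/-- A system operator extended by identity on the ancilla. -/
def sysOp {d N m : ℕ} (A : Matrix (Fin N → Fin d) (Fin N → Fin d) ℂ) :
    Matrix ((Fin N → Fin d) × Fin m) ((Fin N → Fin d) × Fin m) ℂ :=
  Matrix.of fun p q => A p.1 q.1 * (if p.2 = q.2 then (1 : ℂ) else 0)

/-- `C` is classically controlled on the first `k` registers, i.e. of the form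
`Σ_{i₁,…,i_k} |i₁…i_k⟩⟨i₁…i_k| ⊗ V_{i₁…i_k}`. -/
def ControlledOnFirst {d N m : ℕ} (k : ℕ)
    (C : Matrix ((Fin N → Fin d) × Fin m) ((Fin N → Fin d) × Fin m) ℂ) : Prop :=
  ∀ p q, (∃ j : Fin N, (j : ℕ) < k ∧ p.1 j ≠ q.1 j) → C p q = 0

/-- The sequential-scheme unitary
`A_W = (𝟙⊗…⊗W⊗𝟙ₘ)·C_{N-1}·…·C₁·(W⊗𝟙⊗…⊗𝟙ₘ)`. -/
noncomputable def seqUnitary {d N m : ℕ} (W : Matrix (Fin d) (Fin d) ℂ)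
    (C : ℕ → Matrix ((Fin N → Fin d) × Fin m) ((Fin N → Fin d) × Fin m) ℂ) :
    Matrix ((Fin N → Fin d) × Fin m) ((Fin N → Fin d) × Fin m) ℂ :=
  (((List.range (N - 1)).reverse.map fun j =>
      sysOp (actOn N W (j + 1)) * C (j + 1)).prod) * sysOp (actOn N W 0)

/-- Dephasing in the standard product basis on the first `N` registers only. -/
def dephaseFirst (d N m : ℕ) :
    Matrix ((Fin N → Fin d) × Fin m) ((Fin N → Fin d) × Fin m) ℂ →ₗ[ℂ]
    Matrix ((Fin N → Fin d) × Fin m) ((Fin N → Fin d) × Fin m) ℂ where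
  toFun X := Matrix.of fun p q => if p.1 = q.1 then X p q else 0
  map_add' X Y := by
    ext p q
    by_cases h : p.1 = q.1 <;> simp [h]
  map_smul' c X := by
    ext p q
    by_cases h : p.1 = q.1 <;> simp [h]

/-- The Hadamard matrix. -/
noncomputable def Hmat : Matrix (Fin 2) (Fin 2) ℂ :=
  (((1 : ℝ) / Real.sqrt 2 : ℝ) : ℂ) • !![1, 1; 1, -1]

/-- `ψ = (|1⟩⊗|1⟩ − |2⟩⊗|2⟩)/√2`. -/
noncomputable def psiVec : Fin 2 × Fin 2 → ℂ := fun p =>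
  if p = (0, 0) then (((1 : ℝ) / Real.sqrt 2 : ℝ) : ℂ)
  else if p = (1, 1) then -(((1 : ℝ) / Real.sqrt 2 : ℝ) : ℂ) else 0

/-- `ρ = |ψ⟩⟨ψ|`. -/
noncomputable def rhoPsi : Matrix (Fin 2 × Fin 2) (Fin 2 × Fin 2) ℂ :=
  Matrix.of fun p q => psiVec p * (starRingEnd ℂ) (psiVec q)

end Paper

namespace Paper

section Aux

variable {n : Type*} [Fintype n] [DecidableEq n]

open scoped MatrixOrder in
lemma psd_exists_sqrt {M : Matrix n n ℂ} (hM : M.PosSemidef) :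
    ∃ s : Matrix n n ℂ, s.IsHermitian ∧ s * s = M := by
  have h0 : 0 ≤ M := Matrix.nonneg_iff_posSemidef.mpr hM
  exact ⟨CFC.sqrt M, (CFC.sqrt_nonneg M).isSelfAdjoint, CFC.sqrt_mul_sqrt_self M h0⟩

lemma trace_mul_diag (M : Matrix n n ℂ) (f : n → ℂ) :
    (M * Matrix.diagonal f).trace = ∑ i, M i i * f i := by
  simp [Matrix.trace, Matrix.mul_diagonal]

lemma psd_diag_nonneg {M : Matrix n n ℂ} (hM : M.PosSemidef) (i : n) :
    0 ≤ M i i := by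
  exact hM.diag_nonneg

lemma psd_col_eq_zero {M : Matrix n n ℂ} (hM : M.PosSemidef) {j : n}
    (hj : M j j = 0) (i : n) : M i j = 0 := by
  obtain ⟨s, hherm, hmul⟩ := psd_exists_sqrt hM
  -- M j j = ∑ k, conj (sqrt k j) * sqrt k j
  have h1 : M j j = ∑ k, (starRingEnd ℂ) (s k j) * s k j := by
    calc M j j = (s * s) j j := by rw [hmul]
    _ = ∑ k, s j k * s k j := by rw [Matrix.mul_apply]
    _ = ∑ k, (starRingEnd ℂ) (s k j) * s k j := by
        refine Finset.sum_congr rfl fun k _ => ?_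
        congr 1
        conv_lhs => rw [← hherm]
        rw [Matrix.conjTranspose_apply, Complex.star_def]
  have h2 : ∀ k, s k j = 0 := by
    intro k
    have hsum : ∑ k, Complex.normSq (s k j) = 0 := by
      have := hj
      rw [h1] at this
      have := congrArg Complex.re this
      simpa [Complex.normSq, Complex.mul_re, mul_comm] using this
    have := (Finset.sum_eq_zero_iff_of_nonneg (fun k _ => Complex.normSq_nonneg _)).mp hsum k
      (Finset.mem_univ k)
    exact Complex.normSq_eq_zero.mp this
  calc M i j = (s * s) i j := by rw [hmul]
  _ = 0 := by
      rw [Matrix.mul_apply]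
      exact Finset.sum_eq_zero fun k _ => by rw [h2 k, mul_zero]


lemma psd_row_eq_zero {M : Matrix n n ℂ} (hM : M.PosSemidef) {j : n}
    (hj : M j j = 0) (i : n) : M j i = 0 := by
  have h := psd_col_eq_zero hM hj i
  calc M j i = Mᴴ j i := by rw [hM.isHermitian]
  _ = (starRingEnd ℂ) (M i j) := Matrix.conjTranspose_apply _ _ _
  _ = 0 := by rw [h, map_zero]

lemma measChannel_apply (U σ : Matrix n n ℂ) :
    measChannel U σ = Matrix.diagonal (fun i => (Uᴴ * σ * U) i i) := by
  simp only [measChannel, LinearMap.comp_apply, dephaseMap, unitaryChannel,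
    LinearMap.coe_mk, AddHom.coe_mk, Matrix.conjTranspose_conjTranspose]

lemma measChannel_one_apply (σ : Matrix n n ℂ) :
    measChannel (1 : Matrix n n ℂ) σ = Matrix.diagonal (fun i => σ i i) := by
  rw [measChannel_apply]
  simp

end Aux

end Paper

namespace Paper

section Aux2

variable {n : Type*} [Fintype n] [DecidableEq n]

/-- Vectors vanishing on `Δ`. -/
def coordZeroSub (Δ : Finset n) : Submodule ℂ (EuclideanSpace ℂ n) where
  carrier := {v | ∀ j ∈ Δ, v j = 0}
  add_mem' := fun {a b} ha hb j hj => by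
    have : (a + b) j = a j + b j := rfl
    rw [this, ha j hj, hb j hj, add_zero]
  zero_mem' := fun j _ => rfl
  smul_mem' := fun c v hv j hj => by
    have : (c • v) j = c * v j := rfl
    rw [this, hv j hj, mul_zero]

/-- Vectors `v` with `(Uᴴ v) i = 0` for `i ∈ Γ`. -/
def pullZeroSub (U : Matrix n n ℂ) (Γ : Finset n) : Submodule ℂ (EuclideanSpace ℂ n) where
  carrier := {v | ∀ i ∈ Γ, (Uᴴ *ᵥ (WithLp.equiv 2 (n → ℂ)) v) i = 0}
  add_mem' := fun {a b} ha hb i hi => by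
    have : (WithLp.equiv 2 (n → ℂ)) (a + b) =
        (WithLp.equiv 2 (n → ℂ)) a + (WithLp.equiv 2 (n → ℂ)) b := rfl
    rw [this, Matrix.mulVec_add, Pi.add_apply, ha i hi, hb i hi, add_zero]
  zero_mem' := fun i _ => by
    have : (WithLp.equiv 2 (n → ℂ)) (0 : EuclideanSpace ℂ n) = 0 := rfl
    rw [this, Matrix.mulVec_zero]
    rfl
  smul_mem' := fun c v hv i hi => by
    have : (WithLp.equiv 2 (n → ℂ)) (c • v) = c • (WithLp.equiv 2 (n → ℂ)) v := rfl
    rw [this, Matrix.mulVec_smul, Pi.smul_apply, hv i hi, smul_zero]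

lemma singles_span_le (Δ : Finset n) :
    Submodule.span ℂ { v : EuclideanSpace ℂ n |
        ∃ j ∉ Δ, v = (WithLp.equiv 2 (n → ℂ)).symm (Pi.single j 1) } ≤ coordZeroSub Δ := by
  rw [Submodule.span_le]
  rintro v ⟨j, hj, rfl⟩ j' hj'
  have hne : j' ≠ j := fun h => hj (h ▸ hj')
  show ((WithLp.equiv 2 (n → ℂ)).symm (Pi.single j 1) : EuclideanSpace ℂ n) j' = 0
  rw [WithLp.equiv_symm_apply, PiLp.toLp_apply]
  exact Pi.single_eq_of_ne hne 1

lemma sum_singles_eq {Δ : Finset n} {v : n → ℂ} (hv : ∀ j ∈ Δ, v j = 0) :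
    ∑ j ∈ Finset.univ.filter (· ∉ Δ), v j • (Pi.single j 1 : n → ℂ) = v := by
  funext i
  rw [Finset.sum_apply]
  have : ∀ j, (v j • (Pi.single j 1 : n → ℂ)) i = if i = j then v j else 0 := by
    intro j
    rw [Pi.smul_apply, Pi.single_apply]
    by_cases h : i = j <;> simp [h]
  simp only [this]
  rw [Finset.sum_ite_eq (Finset.univ.filter (· ∉ Δ)) i v]
  by_cases hi : i ∈ Δ
  · have : i ∉ Finset.univ.filter (· ∉ Δ) := by simp [hi]
    rw [if_neg this, hv i hi]
  · have : i ∈ Finset.univ.filter (· ∉ Δ) := by simp [hi]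
    rw [if_pos this]

lemma mem_singles_span {Δ : Finset n} {v : EuclideanSpace ℂ n}
    (hv : ∀ j ∈ Δ, v j = 0) :
    v ∈ Submodule.span ℂ { w : EuclideanSpace ℂ n |
        ∃ j ∉ Δ, w = (WithLp.equiv 2 (n → ℂ)).symm (Pi.single j 1) } := by
  have hv' : v = (WithLp.linearEquiv 2 ℂ (n → ℂ)).symm
      (∑ j ∈ Finset.univ.filter (· ∉ Δ), v j • (Pi.single j 1 : n → ℂ)) := by
    rw [sum_singles_eq hv]
    rfl
  rw [hv', map_sum]
  refine Submodule.sum_mem _ fun j hj => ?_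
  rw [_root_.map_smul]
  refine Submodule.smul_mem _ _ (Submodule.subset_span ?_)
  exact ⟨j, (Finset.mem_filter.mp hj).2, rfl⟩

lemma cols_span_le (U : Matrix n n ℂ) (hU : U ∈ Matrix.unitaryGroup n ℂ) (Γ : Finset n) :
    Submodule.span ℂ { v : EuclideanSpace ℂ n |
        ∃ i ∉ Γ, v = (WithLp.equiv 2 (n → ℂ)).symm (fun r => U r i) } ≤ pullZeroSub U Γ := by
  rw [Submodule.span_le]
  rintro v ⟨i, hi, rfl⟩ i' hi'
  have hne : i' ≠ i := fun h => hi (h ▸ hi')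
  show (Uᴴ *ᵥ (WithLp.equiv 2 (n → ℂ)) ((WithLp.equiv 2 (n → ℂ)).symm fun r => U r i)) i' = 0
  rw [Equiv.apply_symm_apply]
  have hcol : (Uᴴ *ᵥ fun r => U r i) = fun k => (Uᴴ * U) k i := by
    funext k
    simp [Matrix.mulVec, Matrix.mul_apply, dotProduct]
  rw [hcol]
  have h1 : Uᴴ * U = 1 := by
    have := hU.1
    rwa [Matrix.star_eq_conjTranspose] at this
  rw [h1]
  exact Matrix.one_apply_ne hne

lemma mem_cols_span {U : Matrix n n ℂ} (hU : U ∈ Matrix.unitaryGroup n ℂ) {Γ : Finset n}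
    {v : EuclideanSpace ℂ n} (hv : ∀ i ∈ Γ, (Uᴴ *ᵥ (WithLp.equiv 2 (n → ℂ)) v) i = 0) :
    v ∈ Submodule.span ℂ { w : EuclideanSpace ℂ n |
        ∃ i ∉ Γ, w = (WithLp.equiv 2 (n → ℂ)).symm (fun r => U r i) } := by
  set w : n → ℂ := Uᴴ *ᵥ (WithLp.equiv 2 (n → ℂ)) v with hw
  have hUU : U * Uᴴ = 1 := by
    have := hU.2
    rwa [Matrix.star_eq_conjTranspose] at this
  have hvw : (WithLp.equiv 2 (n → ℂ)) v = U *ᵥ w := by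
    rw [hw, Matrix.mulVec_mulVec, hUU, Matrix.one_mulVec]
  have hsum : (WithLp.equiv 2 (n → ℂ)) v
      = ∑ i ∈ Finset.univ.filter (· ∉ Γ), w i • (fun r => U r i) := by
    rw [hvw]
    funext r
    rw [Finset.sum_apply]
    have hterm : ∀ i, (w i • fun r' => U r' i) r = U r i * w i := by
      intro i
      rw [Pi.smul_apply]
      exact mul_comm (w i) (U r i)
    simp only [hterm]
    rw [Matrix.mulVec, dotProduct]
    rw [← Finset.sum_filter_add_sum_filter_not Finset.univ (· ∉ Γ) (fun i => U r i * w i)]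
    have hzero : ∑ i ∈ Finset.univ.filter (fun i => ¬ i ∉ Γ), U r i * w i = 0 := by
      refine Finset.sum_eq_zero fun i hi => ?_
      have : i ∈ Γ := not_not.mp (Finset.mem_filter.mp hi).2
      rw [hv i this, mul_zero]
    rw [hzero, add_zero]
  have hv' : v = (WithLp.linearEquiv 2 ℂ (n → ℂ)).symm
      (∑ i ∈ Finset.univ.filter (· ∉ Γ), w i • (fun r => U r i)) := by
    rw [← hsum]
    rfl
  rw [hv', map_sum]
  refine Submodule.sum_mem _ fun i hi => ?_
  rw [_root_.map_smul]
  refine Submodule.smul_mem _ _ (Submodule.subset_span ?_)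
  exact ⟨i, (Finset.mem_filter.mp hi).2, rfl⟩

end Aux2

end Paper

namespace Paper

section Aux3

variable {n : Type*} [Fintype n] [DecidableEq n]

lemma toEuclideanLin_projMatrix (K : Submodule ℂ (EuclideanSpace ℂ n)) :
    Matrix.toEuclideanLin (projMatrix K) =
      K.subtype ∘ₗ (K.orthogonalProjectionOnto).toLinearMap :=
  LinearEquiv.apply_symm_apply _ _

lemma projMatrix_mulVec_mem (K : Submodule ℂ (EuclideanSpace ℂ n)) (x : n → ℂ) :
    ((WithLp.equiv 2 (n → ℂ)).symm (projMatrix K *ᵥ x) : EuclideanSpace ℂ n) ∈ K := by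
  rw [WithLp.equiv_symm_apply, ← Matrix.toEuclideanLin_apply_piLp_toLp, toEuclideanLin_projMatrix]
  exact Submodule.coe_mem _

lemma projMatrix_mulVec_of_mem {K : Submodule ℂ (EuclideanSpace ℂ n)}
    {v : EuclideanSpace ℂ n} (hv : v ∈ K) :
    projMatrix K *ᵥ (WithLp.equiv 2 (n → ℂ)) v = (WithLp.equiv 2 (n → ℂ)) v := by
  have h1 : Matrix.toEuclideanLin (projMatrix K) v = v := by
    rw [toEuclideanLin_projMatrix]
    exact Submodule.starProjection_eq_self_iff.mpr hv
  rw [Matrix.toEuclideanLin_apply] at h1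
  calc projMatrix K *ᵥ (WithLp.equiv 2 (n → ℂ)) v
      = (WithLp.equiv 2 (n → ℂ)) ((WithLp.equiv 2 (n → ℂ)).symm
          (projMatrix K *ᵥ (WithLp.equiv 2 (n → ℂ)) v)) := (Equiv.apply_symm_apply _ _).symm
  _ = (WithLp.equiv 2 (n → ℂ)) v := congrArg _ h1

lemma projMatrix_conjTranspose (K : Submodule ℂ (EuclideanSpace ℂ n)) :
    (projMatrix K)ᴴ = projMatrix K := by
  apply Matrix.toEuclideanLin.injective
  rw [Matrix.toEuclideanLin_conjTranspose_eq_adjoint, toEuclideanLin_projMatrix]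
  symm
  rw [LinearMap.eq_adjoint_iff]
  intro x y
  exact Submodule.inner_starProjection_left_eq_right K x y

end Aux3

end Paper

namespace Paper

section Aux4

variable {n : Type*} [Fintype n] [DecidableEq n]

lemma conj_sqrt_entry {s : Matrix n n ℂ} (hs : s.IsHermitian) (k j : n) :
    (starRingEnd ℂ) (s k j) = s j k := by
  calc (starRingEnd ℂ) (s k j) = sᴴ j k := (Matrix.conjTranspose_apply _ _ _).symm
  _ = s j k := by rw [hs]

lemma re_trace_mul_le (B : Matrix n n ℂ) {σ : Matrix n n ℂ} (hσ : σ.PosSemidef) :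
    ((B * σ).trace).re ≤ opNorm B * (σ.trace).re := by
  obtain ⟨s, hherm, hmul⟩ := psd_exists_sqrt hσ
  have hcyc : (B * σ).trace = (s * B * s).trace := by
    rw [← hmul, ← Matrix.mul_assoc, Matrix.trace_mul_comm (B * s) s, Matrix.mul_assoc,
      ← Matrix.mul_assoc]
  have key : ∀ j, ((s * B * s) j j).re ≤ opNorm B * ((s * s) j j).re := by
    intro j
    set x : EuclideanSpace ℂ n := (WithLp.equiv 2 (n → ℂ)).symm (fun k => s k j) with hx
    have hBx : (Matrix.toEuclideanCLM (𝕜 := ℂ) B) x =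
        (WithLp.equiv 2 (n → ℂ)).symm (B *ᵥ fun k => s k j) := by
      rw [hx]; rfl
    have hinner : (inner ℂ x ((Matrix.toEuclideanCLM (𝕜 := ℂ) B) x) : ℂ) = (s * B * s) j j := by
      rw [hBx, hx]
      simp only [PiLp.inner_apply, RCLike.inner_apply, WithLp.equiv_symm_apply, PiLp.toLp_apply]
      rw [Matrix.mul_assoc, Matrix.mul_apply]
      refine Finset.sum_congr rfl fun k _ => ?_
      rw [conj_sqrt_entry hherm k j]
      exact mul_comm _ _
    have hself : (inner ℂ x x : ℂ) = (s * s) j j := by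
      rw [hx]
      simp only [PiLp.inner_apply, RCLike.inner_apply, WithLp.equiv_symm_apply, PiLp.toLp_apply]
      rw [Matrix.mul_apply]
      refine Finset.sum_congr rfl fun k _ => ?_
      rw [conj_sqrt_entry hherm k j]
      exact mul_comm _ _
    have hre : ((s * B * s) j j).re ≤ ‖(inner ℂ x ((Matrix.toEuclideanCLM (𝕜 := ℂ) B) x) : ℂ)‖ := by
      rw [← hinner]
      exact Complex.re_le_norm _
    have hcs : ‖(inner ℂ x ((Matrix.toEuclideanCLM (𝕜 := ℂ) B) x) : ℂ)‖
        ≤ ‖x‖ * ‖(Matrix.toEuclideanCLM (𝕜 := ℂ) B) x‖ := norm_inner_le_norm _ _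
    have hop : ‖(Matrix.toEuclideanCLM (𝕜 := ℂ) B) x‖ ≤ opNorm B * ‖x‖ :=
      ContinuousLinearMap.le_opNorm _ x
    have hnormsq : ‖x‖ ^ 2 = ((s * s) j j).re := by
      rw [← hself]
      exact (inner_self_eq_norm_sq (𝕜 := ℂ) x).symm
    calc ((s * B * s) j j).re ≤ ‖x‖ * ‖(Matrix.toEuclideanCLM (𝕜 := ℂ) B) x‖ := hre.trans hcs
    _ ≤ ‖x‖ * (opNorm B * ‖x‖) := by
        exact mul_le_mul_of_nonneg_left hop (norm_nonneg x)
    _ = opNorm B * ‖x‖ ^ 2 := by ring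
    _ = opNorm B * ((s * s) j j).re := by rw [hnormsq]
  have htr : ((s * B * s).trace).re = ∑ j, ((s * B * s) j j).re := by
    rw [Matrix.trace]
    exact Complex.re_sum _ _
  have htr2 : (σ.trace).re = ∑ j, ((s * s) j j).re := by
    rw [← hmul, Matrix.trace]
    exact Complex.re_sum _ _
  rw [hcyc, htr, htr2, Finset.mul_sum]
  exact Finset.sum_le_sum fun j _ => key j

lemma exists_top_eigenvector [Nonempty n] {B : Matrix n n ℂ} (hB : B.PosSemidef) :
    ∃ (lam : ℝ) (v : n → ℂ), 0 ≤ lam ∧ opNorm B ≤ lam ∧ star v ⬝ᵥ v = 1 ∧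
      B *ᵥ v = (lam : ℂ) • v := by
  have hH : B.IsHermitian := hB.isHermitian
  obtain ⟨i₀, -, hmax⟩ := Finset.exists_max_image Finset.univ hH.eigenvalues
    ⟨Classical.arbitrary n, Finset.mem_univ _⟩
  set lam := hH.eigenvalues i₀ with hlam
  set b := hH.eigenvectorBasis with hb
  refine ⟨lam, ⇑(b i₀), hB.eigenvalues_nonneg i₀, ?_, ?_, ?_⟩
  · -- opNorm B ≤ lam
    refine ContinuousLinearMap.opNorm_le_bound _ (hB.eigenvalues_nonneg i₀) fun x => ?_
    have hrepr : ∀ i, b.repr ((Matrix.toEuclideanCLM (𝕜 := ℂ) B) x) i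
        = (hH.eigenvalues i : ℂ) * b.repr x i := by
      intro i
      rw [OrthonormalBasis.repr_apply_apply, OrthonormalBasis.repr_apply_apply]
      have hadj : IsSelfAdjoint (Matrix.toEuclideanCLM (𝕜 := ℂ) B) := by
        have hstar : star B = B := by rw [Matrix.star_eq_conjTranspose]; exact hH
        rw [isSelfAdjoint_iff, ← map_star, hstar]
      calc (inner ℂ (b i) ((Matrix.toEuclideanCLM (𝕜 := ℂ) B) x) : ℂ)
          = inner ℂ ((Matrix.toEuclideanCLM (𝕜 := ℂ) B) (b i)) x := by
            rw [← ContinuousLinearMap.adjoint_inner_left, hadj.adjoint_eq]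
      _ = inner ℂ ((hH.eigenvalues i : ℂ) • b i) x := by
            congr 1
            have hthis : (Matrix.toEuclideanCLM (𝕜 := ℂ) B) (b i)
                = (WithLp.equiv 2 (n → ℂ)).symm (B *ᵥ (WithLp.equiv 2 (n → ℂ)) (b i)) := by
              have h0 : (Matrix.toEuclideanCLM (𝕜 := ℂ) B) (b i)
                  = Matrix.toEuclideanLin B (b i) := by
                rw [← Matrix.coe_toEuclideanCLM_eq_toEuclideanLin]
                rfl
              rw [h0, Matrix.toEuclideanLin_apply]; rfl
            rw [hthis]
            change (WithLp.equiv 2 (n → ℂ)).symm (B *ᵥ ⇑(b i)) = _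
            rw [hH.mulVec_eigenvectorBasis]
            apply (WithLp.equiv 2 (n → ℂ)).injective
            funext k
            rw [Equiv.apply_symm_apply]
            show (hH.eigenvalues i • (WithLp.equiv 2 (n → ℂ)) (b i)) k
                = ((WithLp.equiv 2 (n → ℂ)) ((hH.eigenvalues i : ℂ) • b i)) k
            rw [Pi.smul_apply]
            have h1 : ((WithLp.equiv 2 (n → ℂ)) ((hH.eigenvalues i : ℂ) • b i)) k
                = (hH.eigenvalues i : ℂ) * ((WithLp.equiv 2 (n → ℂ)) (b i)) k := rfl
            rw [h1, Complex.real_smul]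
      _ = (hH.eigenvalues i : ℂ) * inner ℂ (b i) x := by
            rw [inner_smul_left]
            congr 1
            exact Complex.conj_ofReal _
    have hnorm : ‖(Matrix.toEuclideanCLM (𝕜 := ℂ) B) x‖
        = ‖b.repr ((Matrix.toEuclideanCLM (𝕜 := ℂ) B) x)‖ := (b.repr.norm_map _).symm
    have hxnorm : ‖x‖ = ‖b.repr x‖ := (b.repr.norm_map _).symm
    rw [hnorm, hxnorm]
    rw [EuclideanSpace.norm_eq, EuclideanSpace.norm_eq]
    have hbound : ∑ i, ‖b.repr ((Matrix.toEuclideanCLM (𝕜 := ℂ) B) x) i‖ ^ 2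
        ≤ ∑ i, lam ^ 2 * ‖b.repr x i‖ ^ 2 := by
      refine Finset.sum_le_sum fun i _ => ?_
      rw [hrepr i, norm_mul]
      have h1 : ‖(hH.eigenvalues i : ℂ)‖ = hH.eigenvalues i := by
        rw [Complex.norm_real, Real.norm_eq_abs, abs_of_nonneg (hB.eigenvalues_nonneg i)]
      rw [mul_pow, h1]
      have h2 : hH.eigenvalues i ^ 2 ≤ lam ^ 2 := by
        have := hmax i (Finset.mem_univ i)
        have h0 := hB.eigenvalues_nonneg i
        nlinarith
      exact mul_le_mul_of_nonneg_right h2 (sq_nonneg _)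
    calc Real.sqrt (∑ i, ‖b.repr ((Matrix.toEuclideanCLM (𝕜 := ℂ) B) x) i‖ ^ 2)
        ≤ Real.sqrt (∑ i, lam ^ 2 * ‖b.repr x i‖ ^ 2) := Real.sqrt_le_sqrt hbound
    _ = lam * Real.sqrt (∑ i, ‖b.repr x i‖ ^ 2) := by
        rw [← Finset.mul_sum, Real.sqrt_mul (sq_nonneg lam), Real.sqrt_sq (hB.eigenvalues_nonneg i₀)]
  · -- star v ⬝ᵥ v = 1
    have h1 : (inner ℂ (b i₀) (b i₀) : ℂ) = 1 := by
      rw [inner_self_eq_norm_sq_to_K]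
      rw [b.orthonormal.1 i₀]
      norm_num
    calc star ⇑(b i₀) ⬝ᵥ ⇑(b i₀) = (inner ℂ (b i₀) (b i₀) : ℂ) := by
          rw [dotProduct]
          simp only [PiLp.inner_apply, RCLike.inner_apply, Pi.star_apply]
          exact Finset.sum_congr rfl fun k _ => mul_comm _ _
    _ = 1 := h1
  · rw [hH.mulVec_eigenvectorBasis]
    funext k
    rw [Pi.smul_apply, Pi.smul_apply, Complex.real_smul]
    rfl

end Aux4

end Paper

namespace Paper

section Aux5

variable {n : Type*} [Fintype n] [DecidableEq n]

lemma basisProj_eq_diagonal (A : Finset n) :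
    basisProj A = Matrix.diagonal (fun i => if i ∈ A then (1 : ℂ) else 0) := by
  ext i j
  rw [basisProj, Matrix.sum_apply]
  by_cases h : i = j
  · subst h
    rw [Matrix.diagonal_apply_eq]
    have hterm : ∀ k, Matrix.single k k (1 : ℂ) i i = if k = i then 1 else 0 := by
      intro k
      by_cases hk : k = i
      · subst hk; simp [Matrix.single_apply_same]
      · simp [Matrix.single, hk]
    simp only [hterm]
    rw [Finset.sum_ite_eq' A i (fun _ => (1 : ℂ))]
  · rw [Matrix.diagonal_apply_ne _ h]
    refine Finset.sum_eq_zero fun k _ => ?_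
    by_cases hk : k = i
    · subst hk
      simp [Matrix.single, h]
    · simp [Matrix.single, hk]

lemma basisProj_posSemidef (A : Finset n) : (basisProj (n := n) A).PosSemidef := by
  rw [basisProj_eq_diagonal]
  refine Matrix.PosSemidef.diagonal fun i => ?_
  by_cases h : i ∈ A <;> simp [h]

lemma trace_diag_mul (f : n → ℂ) (M : Matrix n n ℂ) :
    (Matrix.diagonal f * M).trace = ∑ i, f i * M i i := by
  simp [Matrix.trace, Matrix.diagonal_mul]

lemma vecMulVec_star_isHermitian (v : n → ℂ) :
    (Matrix.vecMulVec v (star v)).IsHermitian := by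
  ext i j
  rw [Matrix.conjTranspose_apply, Matrix.vecMulVec_apply, Matrix.vecMulVec_apply]
  simp only [Pi.star_apply]
  rw [star_mul', star_star]
  exact mul_comm _ _

lemma vecMulVec_star_posSemidef (v : n → ℂ) :
    (Matrix.vecMulVec v (star v)).PosSemidef := by
  refine Matrix.PosSemidef.of_dotProduct_mulVec_nonneg (vecMulVec_star_isHermitian v) fun x => ?_
  have hkey : star x ⬝ᵥ (Matrix.vecMulVec v (star v) *ᵥ x)
      = star (star v ⬝ᵥ x) * (star v ⬝ᵥ x) := by
    simp only [dotProduct, Matrix.vecMulVec_apply, Matrix.mulVec, Pi.star_apply,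
      star_sum, star_mul', star_star, Finset.mul_sum, Finset.sum_mul]
    rw [Finset.sum_comm]
    refine Finset.sum_congr rfl fun i _ => Finset.sum_congr rfl fun j _ => ?_
    ring
  rw [hkey]
  exact star_mul_self_nonneg _

lemma vecMulVec_star_trace (v : n → ℂ) :
    (Matrix.vecMulVec v (star v)).trace = star v ⬝ᵥ v := by
  rw [Matrix.trace, dotProduct]
  refine Finset.sum_congr rfl fun i _ => ?_
  rw [Matrix.diag_apply, Matrix.vecMulVec_apply]
  exact mul_comm _ _

lemma conj_vecMulVec (A : Matrix n n ℂ) (v : n → ℂ) :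
    Aᴴ * Matrix.vecMulVec v (star v) * A
      = Matrix.vecMulVec (Aᴴ *ᵥ v) (star (Aᴴ *ᵥ v)) := by
  ext i j
  simp only [Matrix.mul_apply, Matrix.vecMulVec_apply, Matrix.mulVec, dotProduct,
    Pi.star_apply, star_sum, star_mul', star_star, Matrix.conjTranspose_apply,
    Finset.sum_mul, Finset.mul_sum]
  refine Finset.sum_congr rfl fun l _ => Finset.sum_congr rfl fun k _ => ?_
  ring

end Aux5

end Paper

namespace Paper

section Aux6

variable {n : Type*} [Fintype n] [DecidableEq n]

lemma trace_mul_vecMulVec (C : Matrix n n ℂ) (v : n → ℂ) :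
    (C * Matrix.vecMulVec v (star v)).trace = star v ⬝ᵥ (C *ᵥ v) := by
  simp only [Matrix.trace, Matrix.diag_apply, Matrix.mul_apply, Matrix.vecMulVec_apply,
    dotProduct, Matrix.mulVec, Pi.star_apply, Finset.mul_sum]
  refine Finset.sum_congr rfl fun i _ => Finset.sum_congr rfl fun k _ => ?_
  ring

lemma complex_nonneg_re_im {a : ℂ} (ha : 0 ≤ a) : 0 ≤ a.re ∧ a.im = 0 := by
  rw [Complex.le_def] at ha
  exact ⟨by simpa using ha.1, by simpa using ha.2.symm⟩

lemma complex_mul_re_of_nonneg {a b : ℂ} (ha : 0 ≤ a) (hb : 0 ≤ b) :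
    (a * b).re = a.re * b.re := by
  obtain ⟨-, ha2⟩ := complex_nonneg_re_im ha
  obtain ⟨-, hb2⟩ := complex_nonneg_re_im hb
  rw [Complex.mul_re, ha2, hb2, mul_zero, sub_zero]

end Aux6

end Paper

namespace Paper

/-- The trivial scheme always achieves value `0`. -/
lemma zero_mem_scheme (d : ℕ) (hd : 0 < d) (U : Matrix (Fin d) (Fin d) ℂ) :
    (0 : ℝ) ∈ { t : ℝ | ∃ σ M₁ M₂ M₃ : Matrix (Fin d) (Fin d) ℂ,
      IsDensityMatrix σ ∧ M₁.PosSemidef ∧ M₂.PosSemidef ∧ M₃.PosSemidef ∧ M₁ + M₂ + M₃ = 1 ∧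
      (M₂ * measChannel (1 : Matrix (Fin d) (Fin d) ℂ) σ).trace = 0 ∧
      (M₁ * measChannel U σ).trace = 0 ∧
      t = (1 / 2) * (((M₁ * measChannel (1 : Matrix (Fin d) (Fin d) ℂ) σ).trace).re +
                     ((M₂ * measChannel U σ).trace).re) } := by
  refine ⟨Matrix.diagonal (fun i => if i = (⟨0, hd⟩ : Fin d) then 1 else 0), 0, 0, 1,
    ⟨Matrix.PosSemidef.diagonal fun i => ?_, ?_⟩, Matrix.PosSemidef.zero,
    Matrix.PosSemidef.zero, Matrix.PosSemidef.one, by rw [add_zero, zero_add],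
    by rw [Matrix.zero_mul, Matrix.trace_zero], by rw [Matrix.zero_mul, Matrix.trace_zero],
    by simp⟩
  · by_cases h : i = (⟨0, hd⟩ : Fin d) <;> simp [h]
  · rw [Matrix.trace_diagonal]
    rw [Finset.sum_ite_eq' Finset.univ (⟨0, hd⟩ : Fin d) (fun _ => (1 : ℂ))]
    simp

theorem value_le_norm (d : ℕ) (U : Matrix (Fin d) (Fin d) ℂ)
    (hU : U ∈ Matrix.unitaryGroup (Fin d) ℂ)
    (σ M₁ M₂ M₃ : Matrix (Fin d) (Fin d) ℂ)
    (hσ : IsDensityMatrix σ) (h₁ : M₁.PosSemidef) (h₂ : M₂.PosSemidef) (h₃ : M₃.PosSemidef)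
    (hsum : M₁ + M₂ + M₃ = 1)
    (hc₁ : (M₂ * measChannel (1 : Matrix (Fin d) (Fin d) ℂ) σ).trace = 0)
    (hc₂ : (M₁ * measChannel U σ).trace = 0) :
    ∃ Γ Δ : Finset (Fin d), Disjoint Γ Δ ∧
      (1 / 2) * (((M₁ * measChannel (1 : Matrix (Fin d) (Fin d) ℂ) σ).trace).re +
        ((M₂ * measChannel U σ).trace).re)
      ≤ (1 / 2) * opNorm (PGD U Γ Δ * (basisProj Γ + U * basisProj Δ * Uᴴ) * PGD U Γ Δ) := by
  classical
  set τ : Matrix (Fin d) (Fin d) ℂ := Uᴴ * σ * U with hτdef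
  have hτ : τ.PosSemidef := hσ.1.conjTranspose_mul_mul_same U
  have e1 : (M₁ * measChannel (1 : Matrix (Fin d) (Fin d) ℂ) σ).trace
      = ∑ i, M₁ i i * σ i i := by rw [measChannel_one_apply, trace_mul_diag]
  have e2 : (M₂ * measChannel U σ).trace = ∑ i, M₂ i i * τ i i := by
    rw [measChannel_apply, trace_mul_diag]
  have e1' : (M₂ * measChannel (1 : Matrix (Fin d) (Fin d) ℂ) σ).trace
      = ∑ i, M₂ i i * σ i i := by rw [measChannel_one_apply, trace_mul_diag]
  have e2' : (M₁ * measChannel U σ).trace = ∑ i, M₁ i i * τ i i := by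
    rw [measChannel_apply, trace_mul_diag]
  have hz₂ : ∀ i, M₂ i i * σ i i = 0 := by
    rw [e1'] at hc₁
    intro i
    exact (Finset.sum_eq_zero_iff_of_nonneg fun k _ =>
      mul_nonneg (psd_diag_nonneg h₂ k) (psd_diag_nonneg hσ.1 k)).mp hc₁ i (Finset.mem_univ i)
  have hz₁ : ∀ i, M₁ i i * τ i i = 0 := by
    rw [e2'] at hc₂
    intro i
    exact (Finset.sum_eq_zero_iff_of_nonneg fun k _ =>
      mul_nonneg (psd_diag_nonneg h₁ k) (psd_diag_nonneg hτ k)).mp hc₂ i (Finset.mem_univ i)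
  set Γ : Finset (Fin d) := Finset.univ.filter (fun i => M₁ i i ≠ 0) with hΓdef
  set Δ : Finset (Fin d) := Finset.univ.filter (fun i => M₂ i i ≠ 0 ∧ M₁ i i = 0) with hΔdef
  have hdisj : Disjoint Γ Δ := by
    rw [Finset.disjoint_left]
    intro i hiΓ hiΔ
    rw [hΓdef, Finset.mem_filter] at hiΓ
    rw [hΔdef, Finset.mem_filter] at hiΔ
    exact hiΓ.2 hiΔ.2.2
  have hqΓ : ∀ i ∈ Γ, τ i i = 0 := by
    intro i hi
    rw [hΓdef, Finset.mem_filter] at hi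
    rcases mul_eq_zero.mp (hz₁ i) with h | h
    · exact absurd h hi.2
    · exact h
  have hpΔ : ∀ j ∈ Δ, σ j j = 0 := by
    intro j hj
    rw [hΔdef, Finset.mem_filter] at hj
    rcases mul_eq_zero.mp (hz₂ j) with h | h
    · exact absurd h hj.2.1
    · exact h
  refine ⟨Γ, Δ, hdisj, ?_⟩
  set K : Submodule ℂ (EuclideanSpace ℂ (Fin d)) :=
    (Submodule.span ℂ { v : EuclideanSpace ℂ (Fin d) |
        ∃ i ∉ Γ, v = (WithLp.equiv 2 (Fin d → ℂ)).symm (fun r => U r i) }) ⊓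
    (Submodule.span ℂ { v : EuclideanSpace ℂ (Fin d) |
        ∃ j ∉ Δ, v = (WithLp.equiv 2 (Fin d → ℂ)).symm (Pi.single j 1) }) with hKdef
  have hPGD : PGD U Γ Δ = projMatrix K := rfl
  have hUUc : U * Uᴴ = 1 := by
    have := hU.2
    rwa [Matrix.star_eq_conjTranspose] at this
  have hcol : ∀ l, ((WithLp.equiv 2 (Fin d → ℂ)).symm (fun i => σ i l) :
      EuclideanSpace ℂ (Fin d)) ∈ K := by
    intro l
    rw [hKdef, Submodule.mem_inf]
    constructor
    · apply mem_cols_span hU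
      intro i hi
      rw [Equiv.apply_symm_apply]
      have hmv : (Uᴴ *ᵥ fun r => σ r l) = fun k => (Uᴴ * σ) k l := by
        funext k
        rw [Matrix.mul_apply]
        rfl
      have hUσ : Uᴴ * σ = τ * Uᴴ := by
        rw [hτdef, Matrix.mul_assoc, Matrix.mul_assoc, hUUc, Matrix.mul_one]
      rw [hmv, hUσ]
      show (τ * Uᴴ) i l = 0
      rw [Matrix.mul_apply]
      refine Finset.sum_eq_zero fun k _ => ?_
      rw [psd_row_eq_zero hτ (hqΓ i hi) k, zero_mul]
    · apply mem_singles_span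
      intro j hj
      rw [WithLp.equiv_symm_apply, PiLp.toLp_apply]
      exact psd_row_eq_zero hσ.1 (hpΔ j hj) l
  have hPσ : projMatrix K * σ = σ := by
    ext i l
    have h := projMatrix_mulVec_of_mem (hcol l)
    rw [Equiv.apply_symm_apply] at h
    calc (projMatrix K * σ) i l = (projMatrix K *ᵥ fun r => σ r l) i := by
          rw [Matrix.mul_apply]; rfl
    _ = σ i l := by rw [h]
  have hσP : σ * projMatrix K = σ := by
    calc σ * projMatrix K = σᴴ * (projMatrix K)ᴴ := by rw [hσ.1.1, projMatrix_conjTranspose]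
    _ = (projMatrix K * σ)ᴴ := (Matrix.conjTranspose_mul _ _).symm
    _ = σᴴ := by rw [hPσ]
    _ = σ := hσ.1.1
  set C : Matrix (Fin d) (Fin d) ℂ := basisProj Γ + U * basisProj Δ * Uᴴ with hCdef
  have htrace_eq : (C * σ).trace = (projMatrix K * C * projMatrix K * σ).trace := by
    calc (C * σ).trace = (C * (σ * projMatrix K)).trace := by rw [hσP]
    _ = (C * σ * projMatrix K).trace := by rw [Matrix.mul_assoc]
    _ = (projMatrix K * (C * σ)).trace := (Matrix.trace_mul_comm _ _).symm
    _ = (projMatrix K * C * σ).trace := by rw [Matrix.mul_assoc]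
    _ = (projMatrix K * C * (projMatrix K * σ)).trace := by rw [hPσ]
    _ = (projMatrix K * C * projMatrix K * σ).trace := by
          rw [Matrix.mul_assoc (projMatrix K * C)]
  -- pointwise bound
  have hM1le : ∀ i, (M₁ i i).re ≤ 1 := by
    intro i
    have hdd : M₁ i i + M₂ i i + M₃ i i = 1 := by
      have := congrArg (fun M => M i i) hsum
      simpa [Matrix.one_apply] using this
    have hre := congrArg Complex.re hdd
    simp only [Complex.add_re, Complex.one_re] at hre
    have h2 := (complex_nonneg_re_im (psd_diag_nonneg h₂ i)).1
    have h3 := (complex_nonneg_re_im (psd_diag_nonneg h₃ i)).1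
    linarith
  have hM2le : ∀ i, (M₂ i i).re ≤ 1 := by
    intro i
    have hdd : M₁ i i + M₂ i i + M₃ i i = 1 := by
      have := congrArg (fun M => M i i) hsum
      simpa [Matrix.one_apply] using this
    have hre := congrArg Complex.re hdd
    simp only [Complex.add_re, Complex.one_re] at hre
    have h1 := (complex_nonneg_re_im (psd_diag_nonneg h₁ i)).1
    have h3 := (complex_nonneg_re_im (psd_diag_nonneg h₃ i)).1
    linarith
  have hbound : ∀ i, (M₁ i i * σ i i).re + (M₂ i i * τ i i).re
      ≤ (if i ∈ Γ then (σ i i).re else 0) + (if i ∈ Δ then (τ i i).re else 0) := by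
    intro i
    have hσre := (complex_nonneg_re_im (psd_diag_nonneg hσ.1 i)).1
    have hτre := (complex_nonneg_re_im (psd_diag_nonneg hτ i)).1
    have hb1 : (M₁ i i * σ i i).re ≤ (if i ∈ Γ then (σ i i).re else 0) := by
      by_cases h : M₁ i i = 0
      · have : i ∉ Γ := by rw [hΓdef, Finset.mem_filter]; tauto
        rw [if_neg this, h, zero_mul, Complex.zero_re]
      · have hmem : i ∈ Γ := by rw [hΓdef, Finset.mem_filter]; exact ⟨Finset.mem_univ i, h⟩
        rw [if_pos hmem, complex_mul_re_of_nonneg (psd_diag_nonneg h₁ i) (psd_diag_nonneg hσ.1 i)]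
        calc (M₁ i i).re * (σ i i).re ≤ 1 * (σ i i).re :=
              mul_le_mul_of_nonneg_right (hM1le i) hσre
        _ = (σ i i).re := one_mul _
    have hb2 : (M₂ i i * τ i i).re ≤ (if i ∈ Δ then (τ i i).re else 0) := by
      by_cases h : M₂ i i = 0
      · have hle : (0:ℝ) ≤ (if i ∈ Δ then (τ i i).re else 0) := by
          by_cases hm : i ∈ Δ
          · rw [if_pos hm]; exact hτre
          · rw [if_neg hm]
        rw [h, zero_mul, Complex.zero_re]
        exact hle
      · by_cases h1 : M₁ i i = 0
        · have hmem : i ∈ Δ := by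
            rw [hΔdef, Finset.mem_filter]
            exact ⟨Finset.mem_univ i, h, h1⟩
          rw [if_pos hmem,
            complex_mul_re_of_nonneg (psd_diag_nonneg h₂ i) (psd_diag_nonneg hτ i)]
          calc (M₂ i i).re * (τ i i).re ≤ 1 * (τ i i).re :=
                mul_le_mul_of_nonneg_right (hM2le i) hτre
          _ = (τ i i).re := one_mul _
        · -- M₁ i i ≠ 0 so τ i i = 0
          have hmem : i ∈ Γ := by rw [hΓdef, Finset.mem_filter]; exact ⟨Finset.mem_univ i, h1⟩
          rw [hqΓ i hmem]
          simp
    linarith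
  -- identify RHS sums with traces
  have hsumΓ : ∑ i, (if i ∈ Γ then (σ i i).re else 0) = ((basisProj Γ * σ).trace).re := by
    rw [basisProj_eq_diagonal, trace_diag_mul, Complex.re_sum]
    refine Finset.sum_congr rfl fun i _ => ?_
    by_cases h : i ∈ Γ <;> simp [h]
  have hcyclic : ((U * basisProj Δ * Uᴴ) * σ).trace = (basisProj Δ * τ).trace := by
    calc ((U * basisProj Δ * Uᴴ) * σ).trace
        = ((U * basisProj Δ) * (Uᴴ * σ)).trace := by rw [Matrix.mul_assoc]
    _ = ((Uᴴ * σ) * (U * basisProj Δ)).trace := Matrix.trace_mul_comm _ _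
    _ = ((Uᴴ * σ * U) * basisProj Δ).trace := by
          rw [Matrix.mul_assoc (Uᴴ * σ), ← Matrix.mul_assoc]
    _ = (basisProj Δ * τ).trace := by rw [Matrix.trace_mul_comm]
  have hsumΔ : ∑ i, (if i ∈ Δ then (τ i i).re else 0) = (((U * basisProj Δ * Uᴴ) * σ).trace).re := by
    rw [hcyclic, basisProj_eq_diagonal, trace_diag_mul, Complex.re_sum]
    refine Finset.sum_congr rfl fun i _ => ?_
    by_cases h : i ∈ Δ <;> simp [h]
  -- final chain
  have hval : ((M₁ * measChannel (1 : Matrix (Fin d) (Fin d) ℂ) σ).trace).re +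
      ((M₂ * measChannel U σ).trace).re ≤ ((C * σ).trace).re := by
    rw [e1, e2, Complex.re_sum, Complex.re_sum]
    rw [hCdef, Matrix.add_mul, Matrix.trace_add, Complex.add_re, ← hsumΓ, ← hsumΔ]
    calc (∑ i, (M₁ i i * σ i i).re) + ∑ i, (M₂ i i * τ i i).re
        = ∑ i, ((M₁ i i * σ i i).re + (M₂ i i * τ i i).re) := Finset.sum_add_distrib.symm
    _ ≤ ∑ i, ((if i ∈ Γ then (σ i i).re else 0) + (if i ∈ Δ then (τ i i).re else 0)) :=
        Finset.sum_le_sum fun i _ => hbound i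
    _ = (∑ i, if i ∈ Γ then (σ i i).re else 0) + ∑ i, if i ∈ Δ then (τ i i).re else 0 :=
        Finset.sum_add_distrib
  have hfinal : ((C * σ).trace).re
      ≤ opNorm (projMatrix K * C * projMatrix K) := by
    rw [htrace_eq]
    have := re_trace_mul_le (projMatrix K * C * projMatrix K) hσ.1
    rwa [hσ.2, Complex.one_re, mul_one] at this
  rw [hPGD]
  have hhalf : (0:ℝ) ≤ 1/2 := by norm_num
  calc (1 / 2) * (((M₁ * measChannel (1 : Matrix (Fin d) (Fin d) ℂ) σ).trace).re +
        ((M₂ * measChannel U σ).trace).re)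
      ≤ (1/2) * ((C * σ).trace).re := mul_le_mul_of_nonneg_left hval hhalf
  _ ≤ (1/2) * opNorm (projMatrix K * C * projMatrix K) :=
        mul_le_mul_of_nonneg_left hfinal hhalf

end Paper

namespace Paper

theorem norm_le_value (d : ℕ) (hd : 0 < d) (U : Matrix (Fin d) (Fin d) ℂ)
    (hU : U ∈ Matrix.unitaryGroup (Fin d) ℂ) (Γ Δ : Finset (Fin d)) (hdisj : Disjoint Γ Δ) :
    ∃ t : ℝ, t ∈ { t : ℝ | ∃ σ M₁ M₂ M₃ : Matrix (Fin d) (Fin d) ℂ,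
      IsDensityMatrix σ ∧ M₁.PosSemidef ∧ M₂.PosSemidef ∧ M₃.PosSemidef ∧ M₁ + M₂ + M₃ = 1 ∧
      (M₂ * measChannel (1 : Matrix (Fin d) (Fin d) ℂ) σ).trace = 0 ∧
      (M₁ * measChannel U σ).trace = 0 ∧
      t = (1 / 2) * (((M₁ * measChannel (1 : Matrix (Fin d) (Fin d) ℂ) σ).trace).re +
                     ((M₂ * measChannel U σ).trace).re) } ∧
      opNorm (PGD U Γ Δ * (basisProj Γ + U * basisProj Δ * Uᴴ) * PGD U Γ Δ) ≤ 2 * t := by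
  classical
  haveI : Nonempty (Fin d) := ⟨⟨0, hd⟩⟩
  set K : Submodule ℂ (EuclideanSpace ℂ (Fin d)) :=
    (Submodule.span ℂ { v : EuclideanSpace ℂ (Fin d) |
        ∃ i ∉ Γ, v = (WithLp.equiv 2 (Fin d → ℂ)).symm (fun r => U r i) }) ⊓
    (Submodule.span ℂ { v : EuclideanSpace ℂ (Fin d) |
        ∃ j ∉ Δ, v = (WithLp.equiv 2 (Fin d → ℂ)).symm (Pi.single j 1) }) with hKdef
  have hPGD : PGD U Γ Δ = projMatrix K := rfl
  set C : Matrix (Fin d) (Fin d) ℂ := basisProj Γ + U * basisProj Δ * Uᴴ with hCdef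
  have hCpsd : C.PosSemidef :=
    (basisProj_posSemidef Γ).add ((basisProj_posSemidef Δ).mul_mul_conjTranspose_same U)
  have hBpsd : (projMatrix K * C * projMatrix K).PosSemidef := by
    have := hCpsd.conjTranspose_mul_mul_same (projMatrix K)
    rwa [projMatrix_conjTranspose] at this
  obtain ⟨lam, v, hlam0, hlamnorm, hv1, heig⟩ := exists_top_eigenvector hBpsd
  rcases eq_or_lt_of_le hlam0 with hlam | hlam
  · refine ⟨0, zero_mem_scheme d hd U, ?_⟩
    rw [hPGD]
    calc opNorm (projMatrix K * C * projMatrix K) ≤ lam := hlamnorm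
    _ ≤ 2 * 0 := by rw [← hlam]; norm_num
  · have hlamne : (lam : ℂ) ≠ 0 := Complex.ofReal_ne_zero.mpr (ne_of_gt hlam)
    have hvK : ((WithLp.equiv 2 (Fin d → ℂ)).symm v : EuclideanSpace ℂ (Fin d)) ∈ K := by
      have h2 : ((WithLp.equiv 2 (Fin d → ℂ)).symm ((projMatrix K * C * projMatrix K) *ᵥ v) :
          EuclideanSpace ℂ (Fin d)) ∈ K := by
        rw [Matrix.mul_assoc, ← Matrix.mulVec_mulVec]
        exact projMatrix_mulVec_mem K _
      rw [heig] at h2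
      have h3 : ((WithLp.equiv 2 (Fin d → ℂ)).symm ((lam : ℂ) • v) : EuclideanSpace ℂ (Fin d))
          = (lam : ℂ) • ((WithLp.equiv 2 (Fin d → ℂ)).symm v : EuclideanSpace ℂ (Fin d)) := rfl
      rw [h3] at h2
      have h4 := K.smul_mem ((lam : ℂ)⁻¹) h2
      rwa [smul_smul, inv_mul_cancel₀ hlamne, one_smul] at h4
    have hPv : projMatrix K *ᵥ v = v := by
      have := projMatrix_mulVec_of_mem hvK
      rwa [Equiv.apply_symm_apply] at this
    have hvK' := hvK
    rw [hKdef] at hvK'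
    have hvmem := Submodule.mem_inf.mp hvK'
    have hvΔ : ∀ j ∈ Δ, v j = 0 := by
      intro j hj
      have h := singles_span_le Δ hvmem.2 j hj
      rwa [WithLp.equiv_symm_apply, PiLp.toLp_apply] at h
    have hvΓ : ∀ i ∈ Γ, (Uᴴ *ᵥ v) i = 0 := by
      intro i hi
      have h := cols_span_le U hU Γ hvmem.1 i hi
      rwa [Equiv.apply_symm_apply] at h
    set w : Fin d → ℂ := Uᴴ *ᵥ v with hwdef
    set σ : Matrix (Fin d) (Fin d) ℂ := Matrix.vecMulVec v (star v) with hσdef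
    have hσdm : IsDensityMatrix σ :=
      ⟨vecMulVec_star_posSemidef v, by rw [hσdef, vecMulVec_star_trace, hv1]⟩
    have hτeq : Uᴴ * σ * U = Matrix.vecMulVec w (star w) := by
      rw [hσdef, conj_vecMulVec, hwdef]
    have hM3 : ((1 : Matrix (Fin d) (Fin d) ℂ) - basisProj Γ - basisProj Δ).PosSemidef := by
      have hdg : (1 : Matrix (Fin d) (Fin d) ℂ) - basisProj Γ - basisProj Δ
          = Matrix.diagonal (fun i => 1 - (if i ∈ Γ then 1 else 0)
              - (if i ∈ Δ then 1 else 0)) := by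
        rw [basisProj_eq_diagonal, basisProj_eq_diagonal, ← Matrix.diagonal_one,
          ← Matrix.diagonal_sub, ← Matrix.diagonal_sub]
      rw [hdg]
      refine Matrix.PosSemidef.diagonal fun i => ?_
      by_cases h1 : i ∈ Γ
      · have h2 : i ∉ Δ := Finset.disjoint_left.mp hdisj h1
        simp [h1, h2]
      · by_cases h2 : i ∈ Δ <;> simp [h1, h2]
    have hc₁ : (basisProj Δ * measChannel (1 : Matrix (Fin d) (Fin d) ℂ) σ).trace = 0 := by
      rw [measChannel_one_apply, trace_mul_diag]
      refine Finset.sum_eq_zero fun i _ => ?_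
      by_cases h : i ∈ Δ
      · have hz : σ i i = 0 := by
          rw [hσdef, Matrix.vecMulVec_apply, hvΔ i h, zero_mul]
        rw [hz, mul_zero]
      · rw [basisProj_eq_diagonal, Matrix.diagonal_apply_eq, if_neg h, zero_mul]
    have hc₂ : (basisProj Γ * measChannel U σ).trace = 0 := by
      rw [measChannel_apply, trace_mul_diag]
      refine Finset.sum_eq_zero fun i _ => ?_
      by_cases h : i ∈ Γ
      · have hz : (Uᴴ * σ * U) i i = 0 := by
          rw [hτeq, Matrix.vecMulVec_apply, hvΓ i h, zero_mul]
        rw [hz, mul_zero]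
      · rw [basisProj_eq_diagonal, Matrix.diagonal_apply_eq, if_neg h, zero_mul]
    have hT1 : (basisProj Γ * measChannel (1 : Matrix (Fin d) (Fin d) ℂ) σ).trace
        = (basisProj Γ * σ).trace := by
      rw [measChannel_one_apply, trace_mul_diag, basisProj_eq_diagonal, trace_diag_mul]
      exact Finset.sum_congr rfl fun i _ => by rw [Matrix.diagonal_apply_eq]
    have hT2 : (basisProj Δ * measChannel U σ).trace
        = (basisProj Δ * (Uᴴ * σ * U)).trace := by
      rw [measChannel_apply, trace_mul_diag, basisProj_eq_diagonal, trace_diag_mul]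
      exact Finset.sum_congr rfl fun i _ => by rw [Matrix.diagonal_apply_eq]
    have hcyc : (basisProj Δ * (Uᴴ * σ * U)).trace = ((U * basisProj Δ * Uᴴ) * σ).trace := by
      calc (basisProj Δ * (Uᴴ * σ * U)).trace
          = ((Uᴴ * σ * U) * basisProj Δ).trace := Matrix.trace_mul_comm _ _
      _ = ((Uᴴ * σ) * (U * basisProj Δ)).trace := by rw [Matrix.mul_assoc (Uᴴ * σ)]
      _ = ((U * basisProj Δ) * (Uᴴ * σ)).trace := Matrix.trace_mul_comm _ _
      _ = ((U * basisProj Δ * Uᴴ) * σ).trace := by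
            rw [Matrix.mul_assoc (U * basisProj Δ)]
    have hval : (basisProj Γ * measChannel (1 : Matrix (Fin d) (Fin d) ℂ) σ).trace
        + (basisProj Δ * measChannel U σ).trace = (lam : ℂ) := by
      rw [hT1, hT2, hcyc, ← Matrix.trace_add, ← Matrix.add_mul, ← hCdef]
      rw [hσdef, trace_mul_vecMulVec]
      have hBv : (projMatrix K * C * projMatrix K) *ᵥ v = projMatrix K *ᵥ (C *ᵥ v) := by
        rw [← Matrix.mulVec_mulVec, hPv, ← Matrix.mulVec_mulVec]
      have hsv : star v ⬝ᵥ (projMatrix K *ᵥ (C *ᵥ v)) = star v ⬝ᵥ (C *ᵥ v) := by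
        rw [Matrix.dotProduct_mulVec]
        have hvP : star v ᵥ* projMatrix K = star v := by
          rw [← projMatrix_conjTranspose, ← Matrix.star_mulVec, hPv]
        rw [hvP]
      calc star v ⬝ᵥ (C *ᵥ v)
          = star v ⬝ᵥ ((projMatrix K * C * projMatrix K) *ᵥ v) := by rw [hBv, hsv]
      _ = star v ⬝ᵥ ((lam : ℂ) • v) := by rw [heig]
      _ = (lam : ℂ) * (star v ⬝ᵥ v) := by
            rw [dotProduct_smul, smul_eq_mul]
      _ = (lam : ℂ) := by rw [hv1, mul_one]
    refine ⟨(1/2) * lam, ⟨σ, basisProj Γ, basisProj Δ,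
      1 - basisProj Γ - basisProj Δ, hσdm, basisProj_posSemidef Γ, basisProj_posSemidef Δ,
      hM3, by abel, hc₁, hc₂, ?_⟩, ?_⟩
    · have hre := congrArg Complex.re hval
      rw [Complex.add_re, Complex.ofReal_re] at hre
      rw [hre]
    · rw [hPGD]
      calc opNorm (projMatrix K * C * projMatrix K) ≤ lam := hlamnorm
      _ = 2 * (1/2 * lam) := by ring

end Paper

namespace Paper

theorem stmt7 (d : ℕ) (U : Matrix (Fin d) (Fin d) ℂ)
    (hU : U ∈ Matrix.unitaryGroup (Fin d) ℂ) :
    puNoEnt U = (1 / 2) * sSup { t : ℝ | ∃ Γ Δ : Finset (Fin d), Disjoint Γ Δ ∧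
      t = opNorm (PGD U Γ Δ * (basisProj Γ + U * basisProj Δ * Uᴴ) * PGD U Γ Δ) } := by
  classical
  rcases Nat.eq_zero_or_pos d with hd | hd
  · subst hd
    have hzero : ∀ M : Matrix (Fin 0) (Fin 0) ℂ, opNorm M = 0 := by
      intro M
      have hM : M = 0 := by
        ext i j
        exact isEmptyElim i
      rw [hM, opNorm, map_zero, norm_zero]
    have hempty : { t : ℝ | ∃ σ M₁ M₂ M₃ : Matrix (Fin 0) (Fin 0) ℂ,
        IsDensityMatrix σ ∧ M₁.PosSemidef ∧ M₂.PosSemidef ∧ M₃.PosSemidef ∧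
        M₁ + M₂ + M₃ = 1 ∧
        (M₂ * measChannel (1 : Matrix (Fin 0) (Fin 0) ℂ) σ).trace = 0 ∧
        (M₁ * measChannel U σ).trace = 0 ∧
        t = (1 / 2) * (((M₁ * measChannel (1 : Matrix (Fin 0) (Fin 0) ℂ) σ).trace).re +
                       ((M₂ * measChannel U σ).trace).re) } = ∅ := by
      ext t
      simp only [Set.mem_setOf_eq, Set.mem_empty_iff_false, iff_false]
      rintro ⟨σ, M₁, M₂, M₃, hσ, -⟩
      have h0 : σ.trace = 0 := by
        rw [Matrix.trace]
        exact Finset.sum_of_isEmpty _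
      exact one_ne_zero (hσ.2 ▸ h0)
    have hset : { t : ℝ | ∃ Γ Δ : Finset (Fin 0), Disjoint Γ Δ ∧
        t = opNorm (PGD U Γ Δ * (basisProj Γ + U * basisProj Δ * Uᴴ) * PGD U Γ Δ) }
        = {(0 : ℝ)} := by
      ext t
      simp only [Set.mem_setOf_eq, Set.mem_singleton_iff]
      constructor
      · rintro ⟨Γ, Δ, -, rfl⟩
        exact hzero _
      · rintro rfl
        exact ⟨∅, ∅, Finset.disjoint_empty_left _, (hzero _).symm⟩
    rw [puNoEnt, hempty, Real.sSup_empty, hset, csSup_singleton, mul_zero]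
  · haveI : Nonempty (Fin d) := ⟨⟨0, hd⟩⟩
    set S₂ := { t : ℝ | ∃ Γ Δ : Finset (Fin d), Disjoint Γ Δ ∧
      t = opNorm (PGD U Γ Δ * (basisProj Γ + U * basisProj Δ * Uᴴ) * PGD U Γ Δ) } with hS₂def
    set S₁ := { t : ℝ | ∃ σ M₁ M₂ M₃ : Matrix (Fin d) (Fin d) ℂ,
      IsDensityMatrix σ ∧ M₁.PosSemidef ∧ M₂.PosSemidef ∧ M₃.PosSemidef ∧ M₁ + M₂ + M₃ = 1 ∧
      (M₂ * measChannel (1 : Matrix (Fin d) (Fin d) ℂ) σ).trace = 0 ∧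
      (M₁ * measChannel U σ).trace = 0 ∧
      t = (1 / 2) * (((M₁ * measChannel (1 : Matrix (Fin d) (Fin d) ℂ) σ).trace).re +
                     ((M₂ * measChannel U σ).trace).re) } with hS₁def
    have hS₂ne : S₂.Nonempty :=
      ⟨_, ∅, ∅, Finset.disjoint_empty_left _, rfl⟩
    have hS₂fin : S₂.Finite := by
      apply Set.Finite.subset (Set.finite_range (fun p : Finset (Fin d) × Finset (Fin d) =>
        opNorm (PGD U p.1 p.2 * (basisProj p.1 + U * basisProj p.2 * Uᴴ) * PGD U p.1 p.2)))
      rintro t ⟨Γ, Δ, -, rfl⟩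
      exact ⟨(Γ, Δ), rfl⟩
    have hS₂bdd : BddAbove S₂ := hS₂fin.bddAbove
    have key1 : ∀ t ∈ S₁, t ≤ (1/2) * sSup S₂ := by
      rintro t ⟨σ, M₁, M₂, M₃, hσ, h₁, h₂, h₃, hsum, hcc₁, hcc₂, rfl⟩
      obtain ⟨Γ, Δ, hdisj, hle⟩ := value_le_norm d U hU σ M₁ M₂ M₃ hσ h₁ h₂ h₃ hsum hcc₁ hcc₂
      refine hle.trans ?_
      have hmem : opNorm (PGD U Γ Δ * (basisProj Γ + U * basisProj Δ * Uᴴ) * PGD U Γ Δ) ∈ S₂ :=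
        ⟨Γ, Δ, hdisj, rfl⟩
      exact mul_le_mul_of_nonneg_left (le_csSup hS₂bdd hmem) (by norm_num)
    have hS₁ne : S₁.Nonempty := ⟨0, zero_mem_scheme d hd U⟩
    have hS₁bdd : BddAbove S₁ := ⟨(1/2) * sSup S₂, fun t ht => key1 t ht⟩
    have key2 : ∀ s ∈ S₂, s ≤ 2 * sSup S₁ := by
      rintro s ⟨Γ, Δ, hdisj, rfl⟩
      obtain ⟨t, htmem, hle⟩ := norm_le_value d hd U hU Γ Δ hdisj
      refine hle.trans ?_
      have := le_csSup hS₁bdd htmem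
      linarith
    have h1 : sSup S₁ ≤ (1/2) * sSup S₂ := csSup_le hS₁ne key1
    have h2 : sSup S₂ ≤ 2 * sSup S₁ := csSup_le hS₂ne key2
    show sSup S₁ = (1/2) * sSup S₂
    linarith

end Paper
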